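/- (Parametrization of PBF, part 1) Let T = L₁L₂U with parameters α_n, and B_n the type II recursion polynomials of T. Then for all n ≥ 0: α_{3n+1} = −B_{n+1}(0)/B_n(0), provided B_n(0) ≠ 0 for all n. -/

import Mathlib

open Polynomial

noncomputable section

/-- Second subdiagonal entry `a_n = α_{3n-1}α_{3n-3}α_{3n-5}` of `T = L₁L₂U`. -/
def ca (α : ℤ → ℝ) (n : ℕ) : ℝ :=
  α (3 * (n : ℤ) - 1) * α (3 * (n : ℤ) - 3) * α (3 * (n : ℤ) - 5)

/-- First subdiagonal entry `b_n = α_{3n}α_{3n-2} + α_{3n-1}α_{3n-2} + α_{3n-1}α_{3n-3}`. -/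
def cb (α : ℤ → ℝ) (n : ℕ) : ℝ :=
  α (3 * (n : ℤ)) * α (3 * (n : ℤ) - 2) + α (3 * (n : ℤ) - 1) * α (3 * (n : ℤ) - 2) +
    α (3 * (n : ℤ) - 1) * α (3 * (n : ℤ) - 3)

/-- Diagonal entry `c_n = α_{3n+1} + α_{3n} + α_{3n-1}`. -/
def cc (α : ℤ → ℝ) (n : ℕ) : ℝ :=
  α (3 * (n : ℤ) + 1) + α (3 * (n : ℤ)) + α (3 * (n : ℤ) - 1)

/-- Action of the upper bidiagonal matrix `U` on a column vector of polynomials: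
`(Uv)_n = α_{3n+1} v_n + v_{n+1}`. -/
def applyU (α : ℤ → ℝ) (v : ℕ → Polynomial ℝ) (n : ℕ) : Polynomial ℝ :=
  C (α (3 * (n : ℤ) + 1)) * v n + v (n + 1)

/-- Action of `L₁` on a column vector: `(L₁v)_n = v_n + α_{3n-1} v_{n-1}` (row `n` has
subdiagonal entry `α_{3(n-1)+2} = α_{3n-1}`; at `n = 0` the coefficient `α_{-1} = 0`). -/
def applyL1 (α : ℤ → ℝ) (v : ℕ → Polynomial ℝ) (n : ℕ) : Polynomial ℝ :=
  v n + C (α (3 * (n : ℤ) - 1)) * v (n - 1)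

/-- Action of `L₂` on a column vector: `(L₂v)_n = v_n + α_{3n} v_{n-1}`. -/
def applyL2 (α : ℤ → ℝ) (v : ℕ → Polynomial ℝ) (n : ℕ) : Polynomial ℝ :=
  v n + C (α (3 * (n : ℤ))) * v (n - 1)

/-- Right action of `L₁` on a row vector: `(AL₁)_n = A_n + α_{3n+2} A_{n+1}`. -/
def leftL1 (α : ℤ → ℝ) (A : ℕ → Polynomial ℝ) (n : ℕ) : Polynomial ℝ :=
  A n + C (α (3 * (n : ℤ) + 2)) * A (n + 1)

/-- Right action of `L₂` on a row vector: `(AL₂)_n = A_n + α_{3n+3} A_{n+1}`. -/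
def leftL2 (α : ℤ → ℝ) (A : ℕ → Polynomial ℝ) (n : ℕ) : Polynomial ℝ :=
  A n + C (α (3 * (n : ℤ) + 3)) * A (n + 1)

/-- Right action of the tetradiagonal Hessenberg matrix `T` on a row vector:
`(AT)_n = A_{n-1} + c_n A_n + b_{n+1} A_{n+1} + a_{n+2} A_{n+2}` (no `A_{-1}` term at `n = 0`). -/
def leftT (α : ℤ → ℝ) (A : ℕ → Polynomial ℝ) (n : ℕ) : Polynomial ℝ :=
  (if n = 0 then 0 else A (n - 1)) + C (cc α n) * A n + C (cb α (n + 1)) * A (n + 1) +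
    C (ca α (n + 2)) * A (n + 2)

end

open Polynomial in
theorem stmt14 (α : ℤ → ℝ) (hα0 : ∀ k : ℤ, k ≤ 0 → α k = 0)
    (B : ℕ → Polynomial ℝ) (hB0 : B 0 = 1)
    (hBrec : ∀ n : ℕ, B (n + 1) =
      (X - C (cc α n)) * B n - C (cb α n) * B (n - 1) - C (ca α n) * B (n - 2))
    (hBne : ∀ n : ℕ, (B n).eval 0 ≠ 0) :
    ∀ n : ℕ, α (3 * (n : ℤ) + 1) = -((B (n + 1)).eval 0) / (B n).eval 0 := by

  have key : ∀ n : ℕ, (B (n + 1)).eval 0 = -(α (3 * (n : ℤ) + 1)) * (B n).eval 0 := by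
    intro n
    induction n using Nat.strong_induction_on with
    | _ n ih =>
      match n with
      | 0 =>
        rw [hBrec 0]
        simp only [cc, cb, ca, hB0]
        simp [hα0 0 le_rfl, hα0 (-1) (by norm_num), hα0 (-2) (by norm_num),
          hα0 (-3) (by norm_num), hα0 (-5) (by norm_num)]
      | 1 =>
        have h0 := ih 0 (by omega)
        have hr := hBrec 1
        rw [hr]
        simp only [cc, cb, ca, Nat.cast_one, eval_sub, eval_mul, eval_add, eval_X, eval_C]
        norm_num at h0 ⊢
        rw [h0]
        norm_num [hα0 0 le_rfl, hα0 (-2) (by norm_num)]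
        ring
      | (m + 2) =>
        have h1 := ih (m + 1) (by omega)
        have h2 := ih m (by omega)
        have hr := hBrec (m + 2)
        rw [show m + 2 - 1 = m + 1 from rfl, show m + 2 - 2 = m from rfl] at hr
        rw [hr]
        simp only [cc, cb, ca, eval_sub, eval_mul, eval_add, eval_X, eval_C]
        rw [h1, h2]
        rw [h2] at h1
        push_cast
        rw [show (3:ℤ) * ((m:ℤ) + 2) - 1 = 3 * m + 5 by ring,
          show (3:ℤ) * ((m:ℤ) + 2) - 3 = 3 * m + 3 by ring,
          show (3:ℤ) * ((m:ℤ) + 2) - 5 = 3 * m + 1 by ring,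
          show (3:ℤ) * ((m:ℤ) + 2) - 2 = 3 * m + 4 by ring,
          show (3:ℤ) * ((m:ℤ) + 2) + 1 = 3 * m + 7 by ring,
          show (3:ℤ) * ((m:ℤ) + 2) = 3 * m + 6 by ring,
          show (3:ℤ) * ((m:ℤ) + 1) + 1 = 3 * m + 4 by ring]
        ring
  intro n
  have h := key n
  have hne := hBne n
  field_simp [h]
  rw [h]
  ring
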